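/- Let X_1,...,X_U be random variables with means μ_u, variances σ_u², and mean of means μ̄ = U^{-1} Σ μ_u. Then for any 1 ≤ q ≤ U, the q-th order statistic satisfies E[X_{(q)}] ≤ μ̄ + sqrt((q-1)/(U-q+1) · Σ_{u=1}^U (σ_u² + (μ_u - μ̄)²)). No independence among the X_u is required. -/

import Mathlib

open MeasureTheory ProbabilityTheory

/-- The `q`-th smallest entry (0-indexed) of a finite tuple of reals. -/
noncomputable def orderStat {U : ℕ} (x : Fin U → ℝ) (q : Fin U) : ℝ :=
  x (Tuple.sort x q)

/-- pointwise bound: k * (orderStat - t)_+ style -/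
lemma orderStat_le_pospart {U : ℕ} (x : Fin U → ℝ) (q : ℕ) (hq1 : 1 ≤ q) (hqU : q ≤ U) (t : ℝ) :
    ((U : ℝ) - q + 1) * max (orderStat x ⟨q - 1, lt_of_lt_of_le (Nat.sub_lt hq1 Nat.one_pos) hqU⟩ - t) 0 ≤
      ∑ u, max (x u - t) 0 := by
  set σ := Tuple.sort x with hσ
  set i0 : Fin U := ⟨q - 1, by omega⟩ with hi0
  have hmono : Monotone (x ∘ σ) := Tuple.monotone_sort x
  have hsum : ∑ u, max (x u - t) 0 = ∑ j, max (x (σ j) - t) 0 :=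
    (Equiv.sum_comp σ (fun u => max (x u - t) 0)).symm
  rw [hsum]
  have h1 : ∑ j ∈ Finset.Ici i0, max (x (σ i0) - t) 0 ≤ ∑ j ∈ Finset.Ici i0, max (x (σ j) - t) 0 := by
    apply Finset.sum_le_sum
    intro j hj
    have : x (σ i0) ≤ x (σ j) := hmono (Finset.mem_Ici.mp hj)
    exact max_le_max (by linarith) le_rfl
  have h2 : ∑ j ∈ Finset.Ici i0, max (x (σ j) - t) 0 ≤ ∑ j, max (x (σ j) - t) 0 := by
    apply Finset.sum_le_sum_of_subset_of_nonneg (Finset.subset_univ _)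
    intro j _ _; exact le_max_right _ _
  have hcard : (Finset.Ici i0).card = U - (q - 1) := Fin.card_Ici i0
  have h3 : ∑ j ∈ Finset.Ici i0, max (x (σ i0) - t) 0 =
      ((U - (q - 1) : ℕ) : ℝ) * max (x (σ i0) - t) 0 := by
    rw [Finset.sum_const, hcard, nsmul_eq_mul]
  have hcast : ((U - (q - 1) : ℕ) : ℝ) = (U : ℝ) - q + 1 := by
    have : (U - (q - 1) : ℕ) = U - q + 1 := by omega
    rw [this]
    push_cast [Nat.cast_sub hqU]
    ring
  have : orderStat x i0 = x (σ i0) := rfl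
  rw [this]
  calc ((U : ℝ) - q + 1) * max (x (σ i0) - t) 0
      = ∑ j ∈ Finset.Ici i0, max (x (σ i0) - t) 0 := by rw [h3, hcast]
    _ ≤ _ := le_trans h1 h2

lemma measurable_finset_inf' {Ω ι : Type*} [MeasurableSpace Ω] (s : Finset ι) (hs : s.Nonempty)
    (f : ι → Ω → ℝ) (hf : ∀ i, Measurable (f i)) :
    Measurable (fun ω => s.inf' hs (fun i => f i ω)) := by
  induction hs using Finset.Nonempty.cons_induction with
  | singleton i => simpa using hf i
  | cons i s his hs ih =>
      simp only [Finset.inf'_cons hs]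
      exact (hf i).inf ih

lemma measurable_finset_sup' {Ω ι : Type*} [MeasurableSpace Ω] (s : Finset ι) (hs : s.Nonempty)
    (f : ι → Ω → ℝ) (hf : ∀ i, Measurable (f i)) :
    Measurable (fun ω => s.sup' hs (fun i => f i ω)) := by
  induction hs using Finset.Nonempty.cons_induction with
  | singleton i => simpa using hf i
  | cons i s his hs ih =>
      simp only [Finset.sup'_cons hs]
      exact (hf i).sup ih

noncomputable def supOr {U : ℕ} (x : Fin U → ℝ) (A : Finset (Fin U)) : ℝ :=
  if h : A.Nonempty then A.sup' h x else 0

lemma famNonempty {U : ℕ} (i : Fin U) :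
    (Finset.univ.filter (fun A : Finset (Fin U) => A.card = i + 1)).Nonempty := by
  refine ⟨Finset.image (Tuple.sort (fun _ : Fin U => (0:ℝ))) (Finset.Iic i), ?_⟩
  simp only [Finset.mem_filter, Finset.mem_univ, true_and]
  rw [Finset.card_image_of_injective _ (Tuple.sort _).injective, Fin.card_Iic]

/-- min-max characterization -/
lemma orderStat_eq_inf_sup {U : ℕ} (x : Fin U → ℝ) (i : Fin U) :
    orderStat x i =
      (Finset.univ.filter (fun A : Finset (Fin U) => A.card = i + 1)).inf' (famNonempty i)
        (supOr x) := by
  set σ := Tuple.sort x with hσ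
  have hmono : Monotone (x ∘ σ) := Tuple.monotone_sort x
  apply le_antisymm
  · -- orderStat ≤ every sup' over A with card = i+1
    apply Finset.le_inf'
    intro A hA
    rw [Finset.mem_filter] at hA
    have hAne : A.Nonempty := Finset.card_pos.mp (by omega)
    rw [supOr, dif_pos hAne]
    -- preimage of A under σ has card i+1, so contains some j ≥ i
    set B := A.image σ.symm with hB
    have hBcard : B.card = i + 1 := by
      rw [hB, Finset.card_image_of_injective _ σ.symm.injective, hA.2]
    have : ∃ j ∈ B, i ≤ j := by
      by_contra h
      push_neg at h
      have : B ⊆ Finset.Iio i := fun j hj => Finset.mem_Iio.mpr (h j hj)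
      have := Finset.card_le_card this
      rw [hBcard, Fin.card_Iio] at this
      omega
    obtain ⟨j, hjB, hij⟩ := this
    obtain ⟨u, huA, hu⟩ := Finset.mem_image.mp hjB
    have : orderStat x i ≤ x u := by
      have h1 : x (σ i) ≤ x (σ j) := hmono hij
      have : σ j = u := by rw [← hu]; simp
      rw [this] at h1
      exact h1
    exact le_trans this (Finset.le_sup' x huA)
  · -- the specific A = σ '' Iic i achieves it
    have hmem : Finset.image σ (Finset.Iic i) ∈
        Finset.univ.filter (fun A : Finset (Fin U) => A.card = i + 1) := by
      simp only [Finset.mem_filter, Finset.mem_univ, true_and]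
      rw [Finset.card_image_of_injective _ σ.injective, Fin.card_Iic]
    refine le_trans (Finset.inf'_le _ hmem) ?_
    have hne : (Finset.image σ (Finset.Iic i)).Nonempty :=
      ⟨σ i, Finset.mem_image_of_mem _ (Finset.mem_Iic.mpr le_rfl)⟩
    rw [supOr, dif_pos hne]
    apply Finset.sup'_le
    intro u hu
    obtain ⟨j, hj, hju⟩ := Finset.mem_image.mp hu
    rw [← hju]
    exact hmono (Finset.mem_Iic.mp hj)

lemma measurable_orderStat {Ω : Type*} [MeasurableSpace Ω] {U : ℕ} (X : Fin U → Ω → ℝ)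
    (hmeas : ∀ u, Measurable (X u)) (i : Fin U) :
    Measurable (fun ω => orderStat (fun u => X u ω) i) := by
  simp only [orderStat_eq_inf_sup]
  apply measurable_finset_inf' _ (famNonempty i)
  intro A
  by_cases hA : A.Nonempty
  · simp only [supOr, dif_pos hA]
    exact measurable_finset_sup' A hA X hmeas
  · simp only [supOr, dif_neg hA]
    exact measurable_const

lemma pospart_integral_le {Ω : Type*} [MeasurableSpace Ω] (μ : Measure Ω) [IsProbabilityMeasure μ]
    {Y : Ω → ℝ} (hY : MemLp Y 2 μ) (t : ℝ) :
    ∫ ω, max (Y ω - t) 0 ∂μ ≤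
      (Real.sqrt (variance Y μ + ((∫ ω, Y ω ∂μ) - t) ^ 2) + ((∫ ω, Y ω ∂μ) - t)) / 2 := by
  set Z : Ω → ℝ := fun ω => Y ω - t with hZdef
  have hZ : MemLp Z 2 μ := hY.sub (memLp_const t)
  have hZint : Integrable Z μ := hZ.integrable one_le_two
  have hYint : Integrable Y μ := hY.integrable one_le_two
  have hZabs : MemLp (fun ω => |Z ω|) 2 μ := hZ.abs
  have hZsq : Integrable (fun ω => Z ω ^ 2) μ := by
    have := hZ.integrable_sq
    simpa using this
  -- ∫ Z = ∫ Y - t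
  have hIZ : ∫ ω, Z ω ∂μ = (∫ ω, Y ω ∂μ) - t := by
    rw [hZdef]
    rw [integral_sub hYint (integrable_const t), integral_const]
    simp
  -- ∫ |Z| ≤ sqrt (∫ Z²)
  have habs_le : ∫ ω, |Z ω| ∂μ ≤ Real.sqrt (∫ ω, Z ω ^ 2 ∂μ) := by
    have hvar := variance_nonneg (fun ω => |Z ω|) μ
    rw [variance_eq_sub hZabs] at hvar
    have hsq : (μ[(fun ω => |Z ω|) ^ 2]) = ∫ ω, Z ω ^ 2 ∂μ := by
      apply integral_congr_ae
      filter_upwards with ω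
      simp [sq_abs]
    rw [hsq] at hvar
    rw [Real.le_sqrt (integral_nonneg fun ω => abs_nonneg _)
      (integral_nonneg fun ω => sq_nonneg _)]
    linarith
  -- ∫ Z² = var Y + (∫Y - t)²
  have hIZ2 : ∫ ω, Z ω ^ 2 ∂μ = variance Y μ + ((∫ ω, Y ω ∂μ) - t) ^ 2 := by
    have hexp : ∀ ω, Z ω ^ 2 = Y ω ^ 2 - 2 * t * Y ω + t ^ 2 := by
      intro ω; rw [hZdef]; ring
    have hYsq : Integrable (fun ω => Y ω ^ 2) μ := by simpa using hY.integrable_sq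
    have h1 : Integrable (fun ω => Y ω ^ 2 - 2 * t * Y ω) μ := hYsq.sub (hYint.const_mul _)
    calc ∫ ω, Z ω ^ 2 ∂μ = ∫ ω, (Y ω ^ 2 - 2 * t * Y ω + t ^ 2) ∂μ := by
          exact integral_congr_ae (Filter.Eventually.of_forall hexp)
      _ = (∫ ω, Y ω ^ 2 ∂μ) - 2 * t * (∫ ω, Y ω ∂μ) + t ^ 2 := by
          rw [integral_add h1 (integrable_const _), integral_sub hYsq (hYint.const_mul _),
            integral_const, integral_const_mul]
          simp
      _ = variance Y μ + ((∫ ω, Y ω ∂μ) - t) ^ 2 := by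
          rw [variance_eq_sub hY]
          have : (μ[Y ^ 2]) = ∫ ω, Y ω ^ 2 ∂μ := rfl
          rw [this]; ring
  -- max = (z + |z|)/2
  have hmax : ∀ ω, max (Z ω) 0 = (Z ω + |Z ω|) / 2 := by
    intro ω
    rcases le_total 0 (Z ω) with h | h
    · rw [max_eq_left h, abs_of_nonneg h]; ring
    · rw [max_eq_right h, abs_of_nonpos h]; ring
  calc ∫ ω, max (Y ω - t) 0 ∂μ = ∫ ω, (Z ω + |Z ω|) / 2 ∂μ := by
        exact integral_congr_ae (Filter.Eventually.of_forall fun ω => hmax ω)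
    _ = ((∫ ω, Z ω ∂μ) + ∫ ω, |Z ω| ∂μ) / 2 := by
        rw [integral_div, integral_add hZint hZint.abs]
    _ ≤ (Real.sqrt (variance Y μ + ((∫ ω, Y ω ∂μ) - t) ^ 2) + ((∫ ω, Y ω ∂μ) - t)) / 2 := by
        rw [hIZ, ← hIZ2]
        linarith [habs_le]

set_option maxHeartbeats 1000000 in

lemma main_calc {U : ℕ} (q : ℕ) (hq2 : 2 ≤ q) (hqU : q ≤ U)
    (I : ℝ) (M V : Fin U → ℝ) (hV : ∀ u, 0 ≤ V u)
    (P : ℝ → Fin U → ℝ)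
    (hI : ∀ t, I ≤ t + ((U : ℝ) - q + 1)⁻¹ * ∑ u, P t u)
    (hP : ∀ t u, P t u ≤ (Real.sqrt (V u + (M u - t) ^ 2) + (M u - t)) / 2) :
    I ≤ (∑ u, M u) / U +
      Real.sqrt (((q - 1 : ℝ) / ((U : ℝ) - q + 1)) *
        ∑ u, (V u + (M u - (∑ v, M v) / U) ^ 2)) := by
  have hU1 : 1 ≤ U := le_trans (le_trans one_le_two hq2) hqU
  have hUpos : (0:ℝ) < U := by exact_mod_cast Nat.pos_of_ne_zero (by omega)
  set a : ℝ := (q : ℝ) - 1 with ha_def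
  set k : ℝ := (U : ℝ) - q + 1 with hk_def
  set mb : ℝ := (∑ u, M u) / U with hmb
  set S : ℝ := ∑ u, (V u + (M u - mb) ^ 2) with hS_def
  have ha1 : 1 ≤ a := by
    have : (2:ℝ) ≤ q := by exact_mod_cast hq2
    rw [ha_def]; linarith
  have hk1 : 1 ≤ k := by
    have : (q:ℝ) ≤ U := by exact_mod_cast hqU
    rw [hk_def]; linarith
  have hUak : (U:ℝ) = a + k := by rw [ha_def, hk_def]; ring
  have hapos : 0 < a := by linarith
  have hkpos : 0 < k := by linarith
  have hS0 : 0 ≤ S := Finset.sum_nonneg fun u _ => add_nonneg (hV u) (sq_nonneg _)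
  set s : ℝ := Real.sqrt S with hs_def
  have hs2 : s ^ 2 = S := Real.sq_sqrt hS0
  have hs0 : 0 ≤ s := Real.sqrt_nonneg _
  set r : ℝ := Real.sqrt ((U:ℝ) * k * a) with hr_def
  have hrpos : 0 < r := Real.sqrt_pos.mpr (by positivity)
  have hr2 : r ^ 2 = (U:ℝ) * k * a := Real.sq_sqrt (by positivity)
  set c : ℝ := s * (a - k) / (2 * r) with hc_def
  set t : ℝ := mb + c with ht_def
  have hsumM : ∑ u, M u = (U:ℝ) * mb := by
    rw [hmb]; field_simp
  clear_value a k mb S s r c t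
  -- combine hI and hP
  have h1 : I ≤ t + k⁻¹ * ∑ u, (Real.sqrt (V u + (M u - t) ^ 2) + (M u - t)) / 2 := by
    refine le_trans (hI t) ?_
    have : ∑ u, P t u ≤ ∑ u, (Real.sqrt (V u + (M u - t) ^ 2) + (M u - t)) / 2 :=
      Finset.sum_le_sum fun u _ => hP t u
    have hk_inv : (0:ℝ) ≤ k⁻¹ := by positivity
    nlinarith [this]
  -- split the sum
  have hsplit : ∑ u, (Real.sqrt (V u + (M u - t) ^ 2) + (M u - t)) / 2 =
      ((∑ u, Real.sqrt (V u + (M u - t) ^ 2)) + ((U:ℝ) * mb - (U:ℝ) * t)) / 2 := by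
    rw [← Finset.sum_div, Finset.sum_add_distrib, Finset.sum_sub_distrib, Finset.sum_const,
      Finset.card_univ, Fintype.card_fin, nsmul_eq_mul, hsumM]
  -- Cauchy-Schwarz
  have hE0 : ∀ u, (0:ℝ) ≤ V u + (M u - t) ^ 2 := fun u => add_nonneg (hV u) (sq_nonneg _)
  have hcs : ∑ u, Real.sqrt (V u + (M u - t) ^ 2) ≤
      Real.sqrt ((U:ℝ) * ∑ u, (V u + (M u - t) ^ 2)) := by
    have h2 := sq_sum_le_card_mul_sum_sq (s := (Finset.univ : Finset (Fin U)))
      (f := fun u => Real.sqrt (V u + (M u - t) ^ 2))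
    rw [Finset.card_univ, Fintype.card_fin] at h2
    have h3 : ∑ u, Real.sqrt (V u + (M u - t) ^ 2) ^ 2 = ∑ u, (V u + (M u - t) ^ 2) :=
      Finset.sum_congr rfl fun u _ => Real.sq_sqrt (hE0 u)
    rw [h3] at h2
    exact Real.le_sqrt_of_sq_le h2
  -- sum identity
  have hsumeq : ∑ u, (V u + (M u - t) ^ 2) = S + (U:ℝ) * c ^ 2 := by
    have hexp : ∀ u : Fin U, V u + (M u - t) ^ 2 =
        (V u + (M u - mb) ^ 2) + (c ^ 2 - 2 * c * (M u - mb)) := by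
      intro u; rw [ht_def]; ring
    rw [Finset.sum_congr rfl fun u _ => hexp u, Finset.sum_add_distrib, ← hS_def,
      Finset.sum_sub_distrib, Finset.sum_const, Finset.card_univ, Fintype.card_fin,
      nsmul_eq_mul, ← Finset.mul_sum, Finset.sum_sub_distrib, Finset.sum_const,
      Finset.card_univ, Fintype.card_fin, nsmul_eq_mul, hsumM]
    ring
  -- the sqrt evaluation
  have hsqrt_eq : Real.sqrt ((U:ℝ) * (S + (U:ℝ) * c ^ 2)) = (U:ℝ) ^ 2 * s / (2 * r) := by
    have key : (U:ℝ) * (S + (U:ℝ) * c ^ 2) = ((U:ℝ) ^ 2 * s / (2 * r)) ^ 2 := by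
      have hr2' : r ^ 2 = (a + k) * k * a := by rw [← hUak]; exact hr2
      rw [hc_def, ← hs2, hUak]
      field_simp
      linear_combination (4 * s ^ 2) * hr2'
    rw [key, Real.sqrt_sq (by positivity)]
  -- final chain
  have h4 : I ≤ t + k⁻¹ * (((U:ℝ) ^ 2 * s / (2 * r) + ((U:ℝ) * mb - (U:ℝ) * t)) / 2) := by
    refine le_trans h1 ?_
    rw [hsplit]
    have hmono : ∑ u, Real.sqrt (V u + (M u - t) ^ 2) ≤ (U:ℝ) ^ 2 * s / (2 * r) := by
      refine le_trans hcs ?_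
      rw [hsumeq, hsqrt_eq]
    have hk_inv : (0:ℝ) ≤ k⁻¹ := by positivity
    nlinarith [hmono]
  have h5 : t + k⁻¹ * (((U:ℝ) ^ 2 * s / (2 * r) + ((U:ℝ) * mb - (U:ℝ) * t)) / 2) =
      mb + a * s / r := by
    rw [ht_def, hc_def, hUak]
    field_simp
    ring
  have h6 : a * s / r ≤ Real.sqrt (a / k * S) := by
    apply Real.le_sqrt_of_sq_le
    rw [div_pow, mul_pow, hr2, hs2]
    rw [div_le_iff₀ (by positivity)]
    have heq : a / k * S * ((U:ℝ) * k * a) = a ^ 2 * S * U := by field_simp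
    rw [heq]
    have h7 : (1:ℝ) ≤ (U:ℝ) := by exact_mod_cast hU1
    nlinarith [mul_nonneg (sq_nonneg a) hS0]
  calc I ≤ mb + a * s / r := by rw [← h5]; exact h4
    _ ≤ mb + Real.sqrt (a / k * S) := by linarith [h6]

/-- Arnold–Groeneveld / Bertsimas–Natarajan–Teo bound. -/
theorem order_statistic_mean_bound
    {Ω : Type*} [MeasurableSpace Ω] (μ : Measure Ω) [IsProbabilityMeasure μ]
    {U : ℕ} (X : Fin U → Ω → ℝ)
    (hmeas : ∀ u, Measurable (X u)) (hL2 : ∀ u, MemLp (X u) 2 μ)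
    (q : ℕ) (hq1 : 1 ≤ q) (hqU : q ≤ U) :
    (∫ ω, orderStat (fun u => X u ω) ⟨q - 1, by omega⟩ ∂μ) ≤
      (∑ u, ∫ ω, X u ω ∂μ) / U +
        Real.sqrt (((q - 1 : ℝ) / ((U : ℝ) - q + 1)) *
          ∑ u, (variance (X u) μ +
            ((∫ ω, X u ω ∂μ) - (∑ v, ∫ ω, X v ω ∂μ) / U) ^ 2)) := by
  classical
  have hU1 : 1 ≤ U := le_trans hq1 hqU
  have hUpos : (0:ℝ) < U := by exact_mod_cast Nat.pos_of_ne_zero (by omega)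
  set i0 : Fin U := ⟨q - 1, by omega⟩ with hi0
  have hXint : ∀ u, Integrable (X u) μ := fun u => (hL2 u).integrable one_le_two
  have hOSmeas : Measurable (fun ω => orderStat (fun u => X u ω) i0) :=
    measurable_orderStat X hmeas i0
  have hOSbound : ∀ ω, |orderStat (fun u => X u ω) i0| ≤ ∑ u, |X u ω| := by
    intro ω
    have h0 : orderStat (fun u => X u ω) i0 = X (Tuple.sort (fun u => X u ω) i0) ω := rfl
    rw [h0]
    exact Finset.single_le_sum (f := fun u => |X u ω|) (fun u _ => abs_nonneg _)
      (Finset.mem_univ _)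
  have hOSint : Integrable (fun ω => orderStat (fun u => X u ω) i0) μ := by
    refine Integrable.mono (g := fun ω => ∑ u, |X u ω|)
      (integrable_finset_sum _ fun u _ => (hXint u).abs) hOSmeas.aestronglyMeasurable ?_
    filter_upwards with ω
    rw [Real.norm_of_nonneg (Finset.sum_nonneg fun u _ => abs_nonneg (X u ω)),
      Real.norm_eq_abs]
    exact hOSbound ω
  rcases Nat.lt_or_ge q 2 with hq2 | hq2
  · -- q = 1
    have hq : q = 1 := by omega
    subst hq
    have hptw : ∀ ω, orderStat (fun u => X u ω) i0 ≤ (∑ u, X u ω) / U := by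
      intro ω
      have hmono := Tuple.monotone_sort (fun u => X u ω)
      have hle : ∀ u, orderStat (fun u => X u ω) i0 ≤ X u ω := by
        intro u
        have h1 : i0 ≤ (Tuple.sort (fun u => X u ω)).symm u := by
          rw [Fin.le_def]
          simp [hi0]
        have h2 := hmono h1
        simpa [orderStat] using h2
      rw [le_div_iff₀ hUpos]
      calc orderStat (fun u => X u ω) i0 * U
          = ∑ _u : Fin U, orderStat (fun u => X u ω) i0 := by
            rw [Finset.sum_const, Finset.card_univ, Fintype.card_fin, nsmul_eq_mul]; ring
        _ ≤ ∑ u, X u ω := Finset.sum_le_sum fun u _ => hle u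
    have hint2 : Integrable (fun ω => (∑ u, X u ω) / U) μ :=
      (integrable_finset_sum _ fun u _ => hXint u).div_const _
    have hbound := integral_mono hOSint hint2 hptw
    have heval : ∫ ω, (∑ u, X u ω) / U ∂μ = (∑ u, ∫ ω, X u ω ∂μ) / U := by
      rw [integral_div, integral_finset_sum _ fun u _ => hXint u]
    rw [heval] at hbound
    exact le_trans hbound (le_add_of_nonneg_right (Real.sqrt_nonneg _))
  · -- q ≥ 2
    have hkpos : (0:ℝ) < (U:ℝ) - q + 1 := by
      have : (q:ℝ) ≤ U := by exact_mod_cast hqU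
      linarith
    have hpos_int : ∀ (t : ℝ) (u : Fin U), Integrable (fun ω => max (X u ω - t) 0) μ :=
      fun t u => ((hXint u).sub (integrable_const t)).pos_part
    have hI : ∀ t : ℝ, (∫ ω, orderStat (fun u => X u ω) i0 ∂μ) ≤
        t + ((U : ℝ) - q + 1)⁻¹ * ∑ u, ∫ ω, max (X u ω - t) 0 ∂μ := by
      intro t
      have hptw : ∀ ω, orderStat (fun u => X u ω) i0 ≤
          t + ((U : ℝ) - q + 1)⁻¹ * ∑ u, max (X u ω - t) 0 := by
        intro ω
        have h1 := orderStat_le_pospart (fun u => X u ω) q hq1 hqU t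
        have h2 : max (orderStat (fun u => X u ω) i0 - t) 0 ≤
            ((U : ℝ) - q + 1)⁻¹ * ∑ u, max (X u ω - t) 0 := by
          rw [inv_mul_eq_div, le_div_iff₀ hkpos]
          calc max (orderStat (fun u => X u ω) i0 - t) 0 * ((U:ℝ) - q + 1)
              = ((U:ℝ) - q + 1) * max (orderStat (fun u => X u ω) i0 - t) 0 := by ring
            _ ≤ _ := h1
        linarith [le_max_left (orderStat (fun u => X u ω) i0 - t) (0:ℝ)]
      have hint2 : Integrable
          (fun ω => t + ((U : ℝ) - q + 1)⁻¹ * ∑ u, max (X u ω - t) 0) μ :=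
        (integrable_const t).add
          ((integrable_finset_sum _ fun u _ => hpos_int t u).const_mul _)
      have hbound := integral_mono hOSint hint2 hptw
      have heval : ∫ ω, (t + ((U : ℝ) - q + 1)⁻¹ * ∑ u, max (X u ω - t) 0) ∂μ =
          t + ((U : ℝ) - q + 1)⁻¹ * ∑ u, ∫ ω, max (X u ω - t) 0 ∂μ := by
        rw [integral_add (integrable_const t)
            ((integrable_finset_sum _ fun u _ => hpos_int t u).const_mul _),
          integral_const, integral_const_mul,
          integral_finset_sum _ fun u _ => hpos_int t u]
        simp
      rw [heval] at hbound
      exact hbound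
    have hP : ∀ (t : ℝ) (u : Fin U), (∫ ω, max (X u ω - t) 0 ∂μ) ≤
        (Real.sqrt (variance (X u) μ + ((∫ ω, X u ω ∂μ) - t) ^ 2) +
          ((∫ ω, X u ω ∂μ) - t)) / 2 :=
      fun t u => pospart_integral_le μ (hL2 u) t
    exact main_calc q hq2 hqU _ (fun u => ∫ ω, X u ω ∂μ) (fun u => variance (X u) μ)
      (fun u => variance_nonneg _ _) (fun t u => ∫ ω, max (X u ω - t) 0 ∂μ) hI hP
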